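/- Backward move B2: If (α_n)_{n≥0}, (β_n)_{n≥0} form a Bailey pair with respect to base a, where a ≠ 0 and a q^m ≠ 1 for all m ≥ 1, then the sequences β'_n = ((−1)^n a^{−n} q^{−binom(n,2)} / (−q;q)_n) Σ_{j=0}^{n} (−1)^j (q^{binom(n−j,2)} (−a;q)_j / (q;q)_{n−j}) β_j and α'_n = ((−a;q)_n q^{−binom(n,2)} a^{−n} / (−q;q)_n) α_n also form a Bailey pair with respect to base a, where binom(m,2) = m(m−1)/2. -/

import Mathlib

open Finset

noncomputable def qPoch (a q : ℂ) (n : ℕ) : ℂ :=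
  ∏ t ∈ Finset.range n, (1 - a * q ^ t)

noncomputable def qPochInf (a q : ℂ) : ℂ :=
  ∏' t : ℕ, (1 - a * q ^ t)

def IsBaileyPair (q a : ℂ) (α β : ℕ → ℂ) : Prop :=
  ∀ n : ℕ, β n =
    ∑ t ∈ Finset.range (n + 1), α t / (qPoch q q (n - t) * qPoch (a * q) q (n + t))


def gb (q : ℂ) : ℕ → ℕ → ℂ
  | _, 0 => 1
  | 0, _+1 => 0
  | N+1, k+1 => q ^ (k+1) * gb q N (k+1) + gb q N k

lemma gb_zero (q : ℂ) (N : ℕ) : gb q N 0 = 1 := by cases N <;> rfl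

lemma gb_of_lt (q : ℂ) : ∀ N k : ℕ, N < k → gb q N k = 0 := by
  intro N
  induction N with
  | zero => intro k hk; match k, hk with | k+1, _ => rfl
  | succ N ih =>
    intro k hk
    match k, hk with
    | k+1, hk =>
      show q ^ (k+1) * gb q N (k+1) + gb q N k = 0
      rw [ih (k+1) (by omega), ih k (by omega)]; ring

lemma qPoch_succ (a q : ℂ) (n : ℕ) :
    qPoch a q (n+1) = qPoch a q n * (1 - a * q ^ n) := Finset.prod_range_succ _ _

lemma qPoch_add (x q : ℂ) (m k : ℕ) :
    qPoch x q (m + k) = qPoch x q m * qPoch (x * q ^ m) q k := by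
  induction k with
  | zero => simp [qPoch]
  | succ k ih =>
    rw [← Nat.add_assoc, qPoch_succ, ih, qPoch_succ, mul_assoc]
    ring_nf

lemma gb_mul (q : ℂ) : ∀ N k : ℕ, k ≤ N →
    qPoch q q k * qPoch q q (N - k) * gb q N k = qPoch q q N := by
  intro N
  induction N with
  | zero => intro k hk; interval_cases k; simp [gb_zero, qPoch]
  | succ N ih =>
    intro k hk
    match k with
    | 0 => simp [gb_zero, qPoch]
    | k+1 =>
      show qPoch q q (k+1) * qPoch q q (N+1-(k+1)) * (q ^ (k+1) * gb q N (k+1) + gb q N k) = _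
      rcases Nat.lt_or_ge k N with hkN | hkN
      · -- k+1 ≤ N
        obtain ⟨m, rfl⟩ : ∃ m, N = k + 1 + m := ⟨N - (k+1), by omega⟩
        have e1 := ih (k+1) (by omega)
        have e2 := ih k (by omega)
        have h3 : k + 1 + m - (k + 1) = m := by omega
        have h2 : k + 1 + m - k = m + 1 := by omega
        rw [h3] at e1
        rw [h2] at e2
        have h4 : k + 1 + m + 1 - (k+1) = m + 1 := by omega
        rw [h4, qPoch_succ q q m, qPoch_succ q q k,
          show k+1+m+1 = (k+1+m)+1 from rfl, qPoch_succ q q (k+1+m)]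
        rw [qPoch_succ q q m] at e2
        rw [qPoch_succ q q k] at e1
        linear_combination (q^(k+1) * (1 - q * q^m)) * e1 + (1 - q * q^k) * e2
      · -- k = N
        obtain rfl : k = N := by omega
        rw [gb_of_lt q k (k+1) (by omega)]
        have e2 := ih k le_rfl
        rw [Nat.sub_self] at e2
        have h0 : qPoch q q 0 = 1 := by simp [qPoch]
        rw [h0] at e2
        rw [show k+1-(k+1) = 0 from by omega, h0,
          show qPoch q q (k+1) = qPoch q q k * (1 - q * q ^ k) from qPoch_succ q q k]
        linear_combination (1 - q * q ^ k) * e2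

lemma choose_two_succ (m : ℕ) : (m+1).choose 2 = m.choose 2 + m := by
  have h := Nat.choose_succ_succ m 1
  simp only [Nat.choose_one_right] at h
  norm_num at h
  omega

lemma key (q : ℂ) : ∀ N : ℕ, ∀ b c : ℂ,
    ∑ k ∈ range (N+1), (-1:ℂ)^k * q^((N-k).choose 2) * gb q N k * qPoch b q k *
        qPoch (c * q^k) q (N-k)
      = q^(N.choose 2) * ∏ i ∈ range N, (b - c * q^i) := by
  intro N
  induction N with
  | zero => intro b c; simp [gb_zero, qPoch]
  | succ N ih =>
    intro b c
    rw [Finset.sum_range_succ']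
    have hsplit : ∀ k, (-1:ℂ)^(k+1) * q^((N+1-(k+1)).choose 2) * gb q (N+1) (k+1) *
          qPoch b q (k+1) * qPoch (c * q^(k+1)) q (N+1-(k+1))
        = ((-1:ℂ)^(k+1) * q^((N-k).choose 2) * (q^(k+1) * gb q N (k+1)) *
            qPoch b q (k+1) * qPoch (c * q^(k+1)) q (N-k))
          + ((-1:ℂ)^(k+1) * q^((N-k).choose 2) * gb q N k *
            qPoch b q (k+1) * qPoch (c * q^(k+1)) q (N-k)) := by
      intro k
      rw [Nat.succ_sub_succ]
      show _ * _ * (q ^ (k+1) * gb q N (k+1) + gb q N k) * _ * _ = _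
      ring
    simp only [hsplit]
    rw [Finset.sum_add_distrib]
    -- second sum via IH at (b*q), (c*q)
    have hB : ∑ k ∈ range (N+1), ((-1:ℂ)^(k+1) * q^((N-k).choose 2) * gb q N k *
          qPoch b q (k+1) * qPoch (c * q^(k+1)) q (N-k))
        = -((1-b) * (q^(N.choose 2) * ∏ i ∈ range N, (b*q - (c*q) * q^i))) := by
      rw [← ih (b*q) (c*q), Finset.mul_sum, ← Finset.sum_neg_distrib]
      refine Finset.sum_congr rfl fun k _ => ?_
      have h1 : qPoch b q (k+1) = (1-b) * qPoch (b*q) q k := by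
        have h := qPoch_add b q 1 k
        rw [Nat.add_comm] at h
        simpa [qPoch_succ, qPoch, mul_comm] using h
      have h2 : c * q^(k+1) = (c*q) * q^k := by ring
      rw [h1, h2, pow_succ]
      ring
    -- first sum + f 0
    have hA0 : ∑ k ∈ range (N+1), ((-1:ℂ)^(k+1) * q^((N-k).choose 2) * (q^(k+1) * gb q N (k+1)) *
          qPoch b q (k+1) * qPoch (c * q^(k+1)) q (N-k))
        = ∑ k ∈ range N, ((-1:ℂ)^(k+1) * q^((N-k).choose 2) * (q^(k+1) * gb q N (k+1)) *
          qPoch b q (k+1) * qPoch (c * q^(k+1)) q (N-k)) := by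
      rw [Finset.sum_range_succ, gb_of_lt q N (N+1) (by omega)]
      simp
    rw [hB, hA0]
    have hmain : (∑ k ∈ range N, ((-1:ℂ)^(k+1) * q^((N-k).choose 2) * (q^(k+1) * gb q N (k+1)) *
          qPoch b q (k+1) * qPoch (c * q^(k+1)) q (N-k)))
          + ((-1:ℂ)^0 * q^((N+1-0).choose 2) * gb q (N+1) 0 * qPoch b q 0 *
            qPoch (c * q^0) q (N+1-0))
        = ∑ k ∈ range (N+1), (q^N * (1 - c*q^N) *
            ((-1:ℂ)^k * q^((N-k).choose 2) * gb q N k * qPoch b q k *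
              qPoch (c * q^k) q (N-k))) := by
      rw [Finset.sum_range_succ']
      congr 1
      · refine Finset.sum_congr rfl fun k hk => ?_
        have hk' : k < N := Finset.mem_range.mp hk
        obtain ⟨m, rfl⟩ : ∃ m, N = k + 1 + m := ⟨N - (k+1), by omega⟩
        rw [show k+1+m - k = m+1 from by omega, show k+1+m - (k+1) = m from by omega,
          choose_two_succ m, qPoch_succ (c * q^(k+1)) q m, pow_add]
        ring
      · simp only [pow_zero, mul_one, Nat.sub_zero, gb_zero, one_mul]
        rw [choose_two_succ N, qPoch_succ c q N, pow_add]
        ring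
    rw [← Finset.mul_sum, ih b c] at hmain
    have hprod : ∏ i ∈ range N, (b*q - c*q*q^i) = q^N * ∏ i ∈ range N, (b - c*q^i) := by
      calc ∏ i ∈ range N, (b*q - c*q*q^i) = ∏ i ∈ range N, (q * (b - c*q^i)) :=
            Finset.prod_congr rfl (fun i _ => by ring)
        _ = q^N * ∏ i ∈ range N, (b - c*q^i) := by
            rw [Finset.prod_mul_distrib, Finset.prod_const, Finset.card_range]
    rw [choose_two_succ N, Finset.prod_range_succ, pow_add]
    linear_combination hmain - (1-b) * q^(N.choose 2) * hprod

lemma choose_two_add (t N : ℕ) : (t+N).choose 2 = t.choose 2 + N.choose 2 + t*N := by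
  induction N with
  | zero => simp
  | succ N ih =>
    rw [show t + (N+1) = (t+N)+1 from by omega, choose_two_succ, ih, choose_two_succ,
      Nat.mul_succ]
    omega

set_option maxHeartbeats 1000000 in
lemma core (q a : ℂ) (hq : q ≠ 0) (ha0 : a ≠ 0)
    (hqq : ∀ m, qPoch q q m ≠ 0) (hnq : ∀ m, qPoch (-q) q m ≠ 0)
    (haq : ∀ m, qPoch (a*q) q m ≠ 0) (t N : ℕ) :
    ∑ k ∈ range (N+1),
      ((-1:ℂ)^(t+N) * a ^ (-((t+N : ℕ) : ℤ)) * q ^ (-(((t+N).choose 2 : ℕ) : ℤ)) /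
          qPoch (-q) q (t+N)) *
        ((-1:ℂ)^(t+k) * (q ^ ((N-k).choose 2) * qPoch (-a) q (t+k) / qPoch q q (N-k)) *
          (1 / (qPoch q q k * qPoch (a*q) q (t+k+t))))
      = (qPoch (-a) q t * q ^ (-((t.choose 2 : ℕ) : ℤ)) * a ^ (-(t : ℤ)) / qPoch (-q) q t) *
          (1 / (qPoch q q N * qPoch (a*q) q (t+N+t))) := by
  have hsgn : ∀ k : ℕ, ((-1:ℂ))^(t+N) * ((-1:ℂ))^(t+k) = (-1:ℂ)^N * (-1:ℂ)^k := by
    intro k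
    rw [pow_add, pow_add, mul_mul_mul_comm, ← mul_pow]
    norm_num
  have hnqt : qPoch (-q) q (t+N) = qPoch (-q) q t * qPoch (-(q^(t+1))) q N := by
    rw [qPoch_add, show (-q) * q^t = -(q^(t+1)) from by ring]
  have hden : qPoch (-(q^(t+1))) q N ≠ 0 := by
    intro h0; exact hnq (t+N) (by rw [hnqt, h0, mul_zero])
  have hAz : a ^ (-((t+N : ℕ) : ℤ)) = (a^t * a^N)⁻¹ := by
    rw [zpow_neg, zpow_natCast, pow_add]
  have hQz : q ^ (-(((t+N).choose 2 : ℕ) : ℤ))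
      = (q^(t.choose 2) * q^(N.choose 2) * q^(t*N))⁻¹ := by
    rw [zpow_neg, zpow_natCast, choose_two_add, pow_add, pow_add]
  have hQtz : q ^ (-((t.choose 2 : ℕ) : ℤ)) = (q^(t.choose 2))⁻¹ := by
    rw [zpow_neg, zpow_natCast]
  have hatz : a ^ (-(t : ℤ)) = (a^t)⁻¹ := by rw [zpow_neg, zpow_natCast]
  -- step 1: canonical single-fraction form with signs swapped
  trans ∑ k ∈ range (N+1),
    (((-1:ℂ)^N * (-1:ℂ)^k *
        (a ^ (-((t+N : ℕ) : ℤ)) * q ^ (-(((t+N).choose 2 : ℕ) : ℤ))) *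
        q ^ ((N-k).choose 2) * qPoch (-a) q (t+k)) /
      (qPoch (-q) q (t+N) * qPoch q q (N-k) * qPoch q q k * qPoch (a*q) q (t+k+t)))
  · refine Finset.sum_congr rfl fun k _ => ?_
    linear_combination ((a ^ (-((t+N : ℕ) : ℤ)) * q ^ (-(((t+N).choose 2 : ℕ) : ℤ)) *
        q ^ ((N-k).choose 2) * qPoch (-a) q (t+k)) /
      (qPoch (-q) q (t+N) * qPoch q q (N-k) * qPoch q q k * qPoch (a*q) q (t+k+t))) * hsgn k
  -- step 2: match with key's summand
  trans ∑ k ∈ range (N+1),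
    ((((-1:ℂ)^N * (a ^ (-((t+N : ℕ) : ℤ)) * q ^ (-(((t+N).choose 2 : ℕ) : ℤ))) *
        qPoch (-a) q t) /
      (qPoch (-q) q (t+N) * qPoch q q N * qPoch (a*q) q (t+N+t))) *
      ((-1:ℂ)^k * q ^ ((N-k).choose 2) * gb q N k * qPoch ((-a) * q^t) q k *
        qPoch ((a*q^(2*t+1)) * q^k) q (N-k)))
  · refine Finset.sum_congr rfl fun k hk => ?_
    have hkN : k ≤ N := by have := Finset.mem_range.mp hk; omega
    obtain ⟨m, rfl⟩ : ∃ m, N = k + m := ⟨N - k, by omega⟩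
    rw [show k + m - k = m from by omega]
    have hgb := gb_mul q (k+m) k (by omega)
    rw [show k + m - k = m from by omega] at hgb
    have hpA : qPoch (-a) q (t+k) = qPoch (-a) q t * qPoch ((-a) * q^t) q k :=
      qPoch_add (-a) q t k
    have hpB : qPoch (a*q) q (t+(k+m)+t)
        = qPoch (a*q) q (t+k+t) * qPoch ((a*q^(2*t+1)) * q^k) q m := by
      rw [show t+(k+m)+t = (t+k+t)+m from by omega, qPoch_add,
        show (a*q) * q^(t+k+t) = (a*q^(2*t+1)) * q^k from by ring]
    have h5 : qPoch ((a*q^(2*t+1)) * q^k) q m ≠ 0 := by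
      intro h0; exact haq (t+(k+m)+t) (by rw [hpB, h0, mul_zero])
    rw [hpA, hpB, div_mul_eq_mul_div,
      div_eq_div_iff
        (mul_ne_zero (mul_ne_zero (mul_ne_zero (hnq _) (hqq m)) (hqq k)) (haq _))
        (mul_ne_zero (mul_ne_zero (hnq _) (hqq _)) (mul_ne_zero (haq _) h5))]
    linear_combination (-((-1:ℂ)^(k+m) * (-1:ℂ)^k *
      (a ^ (-((t+(k+m) : ℕ) : ℤ)) * q ^ (-(((t+(k+m)).choose 2 : ℕ) : ℤ))) *
      q ^ (m.choose 2) * qPoch (-a) q t * qPoch ((-a) * q^t) q k *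
      qPoch (-q) q (t+(k+m)) * qPoch (a*q) q (t+k+t) *
      qPoch ((a*q^(2*t+1)) * q^k) q m)) * hgb
  rw [← Finset.mul_sum, key q N ((-a) * q^t) (a*q^(2*t+1))]
  have hprodsgn : ((-1:ℂ))^N * ∏ i ∈ range N, ((-a) * q^t - (a*q^(2*t+1)) * q^i)
      = (a*q^t)^N * qPoch (-(q^(t+1))) q N := by
    calc ((-1:ℂ))^N * ∏ i ∈ range N, ((-a) * q^t - (a*q^(2*t+1)) * q^i)
        = ∏ i ∈ range N, ((-1:ℂ) * ((-a) * q^t - (a*q^(2*t+1)) * q^i)) := by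
          rw [Finset.prod_mul_distrib, Finset.prod_const, Finset.card_range]
      _ = ∏ i ∈ range N, ((a*q^t) * (1 - (-(q^(t+1))) * q^i)) :=
          Finset.prod_congr rfl fun i _ => by ring
      _ = (a*q^t)^N * qPoch (-(q^(t+1))) q N := by
          rw [Finset.prod_mul_distrib, Finset.prod_const, Finset.card_range]; rfl
  rw [hAz, hQz, hQtz, hatz]
  trans (qPoch (-a) q t * q^(N.choose 2) *
      ((-1:ℂ)^N * ∏ i ∈ range N, ((-a) * q^t - (a*q^(2*t+1)) * q^i))) /
    ((a^t * a^N) * (q^(t.choose 2) * q^(N.choose 2) * q^(t*N)) *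
      (qPoch (-q) q (t+N) * qPoch q q N * qPoch (a*q) q (t+N+t)))
  · ring
  rw [hprodsgn, hnqt]
  have e4 : (a : ℂ)^t ≠ 0 := pow_ne_zero _ ha0
  have e5 : (a : ℂ)^N ≠ 0 := pow_ne_zero _ ha0
  have e6 : (q : ℂ)^(t.choose 2) ≠ 0 := pow_ne_zero _ hq
  have e7 : (q : ℂ)^(N.choose 2) ≠ 0 := pow_ne_zero _ hq
  have e8 : (q : ℂ)^(t*N) ≠ 0 := pow_ne_zero _ hq
  have d1 : (a^t * a^N) * (q^(t.choose 2) * q^(N.choose 2) * q^(t*N)) *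
      ((qPoch (-q) q t * qPoch (-(q^(t+1))) q N) * qPoch q q N *
        qPoch (a*q) q (t+N+t)) ≠ 0 :=
    mul_ne_zero (mul_ne_zero (mul_ne_zero e4 e5)
      (mul_ne_zero (mul_ne_zero e6 e7) e8))
      (mul_ne_zero (mul_ne_zero (mul_ne_zero (hnq t) hden) (hqq N)) (haq _))
  have d2 : q^(t.choose 2) * a^t * qPoch (-q) q t *
      (qPoch q q N * qPoch (a*q) q (t+N+t)) ≠ 0 :=
    mul_ne_zero (mul_ne_zero (mul_ne_zero e6 e4) (hnq t))
      (mul_ne_zero (hqq N) (haq _))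
  trans (qPoch (-a) q t /
      (q^(t.choose 2) * a^t * qPoch (-q) q t * (qPoch q q N * qPoch (a*q) q (t+N+t))))
  · rw [div_eq_div_iff d1 d2]
    ring
  · ring

lemma one_sub_ne (x : ℂ) (hx : ‖x‖ < 1) : (1:ℂ) - x ≠ 0 := by
  intro h0
  have hx1 : x = 1 := by linear_combination -h0
  rw [hx1] at hx
  simp at hx

lemma qq_ne (q : ℂ) (hq1 : ‖q‖ < 1) (m : ℕ) : qPoch q q m ≠ 0 := by
  rw [qPoch]
  refine Finset.prod_ne_zero_iff.mpr fun i _ => one_sub_ne _ ?_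
  rw [norm_mul, norm_pow]
  calc ‖q‖ * ‖q‖ ^ i = ‖q‖ ^ (i+1) := (pow_succ' _ _).symm
    _ < 1 := pow_lt_one₀ (norm_nonneg _) hq1 (Nat.succ_ne_zero i)

lemma nq_ne (q : ℂ) (hq1 : ‖q‖ < 1) (m : ℕ) : qPoch (-q) q m ≠ 0 := by
  rw [qPoch]
  refine Finset.prod_ne_zero_iff.mpr fun i _ => one_sub_ne _ ?_
  rw [show -q * q^i = -(q * q^i) from by ring, norm_neg, norm_mul, norm_pow]
  calc ‖q‖ * ‖q‖ ^ i = ‖q‖ ^ (i+1) := (pow_succ' _ _).symm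
    _ < 1 := pow_lt_one₀ (norm_nonneg _) hq1 (Nat.succ_ne_zero i)

lemma aq_ne (q a : ℂ) (ha : ∀ m : ℕ, 1 ≤ m → a * q ^ m ≠ 1) (m : ℕ) :
    qPoch (a*q) q m ≠ 0 := by
  rw [qPoch]
  refine Finset.prod_ne_zero_iff.mpr fun i _ => ?_
  intro h0
  refine ha (i+1) (by omega) ?_
  have hp : q^(i+1) = q * q^i := pow_succ' q i
  linear_combination a * hp - h0

theorem backward_move_B2 (q a : ℂ) (hq0 : 0 < ‖q‖) (hq1 : ‖q‖ < 1)
    (ha0 : a ≠ 0) (ha : ∀ m : ℕ, 1 ≤ m → a * q ^ m ≠ 1)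
    (α β : ℕ → ℂ) (h : IsBaileyPair q a α β) :
    IsBaileyPair q a
      (fun n => qPoch (-a) q n * q ^ (-(n.choose 2 : ℤ)) * a ^ (-(n : ℤ)) /
        qPoch (-q) q n * α n)
      (fun n => (-1 : ℂ) ^ n * a ^ (-(n : ℤ)) * q ^ (-(n.choose 2 : ℤ)) / qPoch (-q) q n *
        ∑ j ∈ Finset.range (n + 1),
          (-1 : ℂ) ^ j * (q ^ ((n - j).choose 2) * qPoch (-a) q j / qPoch q q (n - j)) *
            β j) := by
  have hq : q ≠ 0 := by
    intro h0
    rw [h0] at hq0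
    simp at hq0
  have hqq : ∀ m, qPoch q q m ≠ 0 := qq_ne q hq1
  have hnq : ∀ m, qPoch (-q) q m ≠ 0 := nq_ne q hq1
  have haq : ∀ m, qPoch (a*q) q m ≠ 0 := aq_ne q a ha
  intro n
  dsimp only
  have h1 : ∀ j ∈ range (n+1),
      (-1:ℂ)^j * (q ^ ((n - j).choose 2) * qPoch (-a) q j / qPoch q q (n - j)) * β j
      = ∑ t ∈ range (j+1), (-1:ℂ)^j *
          (q ^ ((n - j).choose 2) * qPoch (-a) q j / qPoch q q (n - j)) *
          (α t / (qPoch q q (j - t) * qPoch (a*q) q (j + t))) := by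
    intro j _
    rw [h j, Finset.mul_sum]
  rw [Finset.sum_congr rfl h1]
  simp only [Finset.mul_sum]
  rw [Finset.sum_comm' (s := range (n+1)) (t := fun j => range (j+1))
    (t' := range (n+1)) (s' := fun t => Finset.Ico t (n+1))
    (fun j t => by simp only [Finset.mem_range, Finset.mem_Ico]; omega)]
  refine Finset.sum_congr rfl fun t ht => ?_
  have htn : t ≤ n := by have := Finset.mem_range.mp ht; omega
  obtain ⟨N, rfl⟩ : ∃ N, n = t + N := ⟨n - t, by omega⟩
  rw [Finset.sum_Ico_eq_sum_range, show t + N + 1 - t = N + 1 from by omega]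
  have hidx : ∀ k, t + k - t = k := fun k => by omega
  have hidx3 : ∀ k, t + N - (t + k) = N - k := fun k => by omega
  simp only [hidx, hidx3]
  trans (∑ k ∈ range (N+1),
      ((-1:ℂ)^(t+N) * a ^ (-((t+N : ℕ) : ℤ)) * q ^ (-(((t+N).choose 2 : ℕ) : ℤ)) /
          qPoch (-q) q (t+N)) *
        ((-1:ℂ)^(t+k) * (q ^ ((N-k).choose 2) * qPoch (-a) q (t+k) / qPoch q q (N-k)) *
          (1 / (qPoch q q k * qPoch (a*q) q (t+k+t))))) * α t
  · rw [Finset.sum_mul]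
    exact Finset.sum_congr rfl fun k _ => by ring
  rw [core q a hq ha0 hqq hnq haq t N]
  ring
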